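/- The d×d matrix with entries jk/((j+1)(j+k+1)) (for 1 ≤ j,k ≤ d) has determinant d!/(d+1) · ∏_{1≤i<j≤d}(j−i)^2 / ∏_{i=1}^d ∏_{j=1}^d (i+j+1), which is nonzero. -/

import Mathlib

open scoped BigOperators
open Matrix Finset Polynomial

lemma my_cauchy_det (n : ℕ) (x y : Fin n → ℝ)
    (hxy : ∀ i j, x i + y j ≠ 0) (hy : Function.Injective y) :
    Matrix.det (Matrix.of fun i j => (x i + y j)⁻¹) *
        (∏ i : Fin n, ∏ j : Fin n, (x i + y j)) =
      (∏ i : Fin n, ∏ j ∈ Finset.Ioi i, (x j - x i)) *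
      (∏ i : Fin n, ∏ j ∈ Finset.Ioi i, (y j - y i)) := by
  -- polynomials p j (t) = ∏_{k ≠ j} (t + y k)
  set p : Fin n → ℝ[X] := fun j => ∏ k ∈ univ.erase j, (X + C (y k)) with hp
  have hdeg : ∀ j, (p j).natDegree < n := by
    intro j
    have : (p j).natDegree = ∑ k ∈ univ.erase j, (X + C (y k)).natDegree := by
      rw [hp]
      exact Polynomial.natDegree_prod _ _ (fun k _ => X_add_C_ne_zero _)
    simp only [natDegree_X_add_C, Finset.sum_const, smul_eq_mul, mul_one] at this
    rw [this, Finset.card_erase_of_mem (Finset.mem_univ j), Finset.card_univ, Fintype.card_fin]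
    have := j.is_lt
    omega
  set A : Matrix (Fin n) (Fin n) ℝ := Matrix.of fun m j => (p j).coeff m with hA
  have heval : ∀ (t : ℝ) (j : Fin n),
      (∑ m : Fin n, t ^ (m : ℕ) * (p j).coeff m) = (p j).eval t := by
    intro t j
    rw [Polynomial.eval_eq_sum_range' (hdeg j) t, ← Fin.sum_univ_eq_sum_range]
    simp [mul_comm]
  -- B = V_x * A
  have hB : vandermonde x * A =
      Matrix.of fun i j => (∏ k : Fin n, (x i + y k)) * (x i + y j)⁻¹ := by
    ext i j
    rw [Matrix.mul_apply]
    simp only [vandermonde, hA, Matrix.of_apply]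
    rw [heval (x i) j, hp]
    simp only [Polynomial.eval_prod, Polynomial.eval_add, Polynomial.eval_X, Polynomial.eval_C]
    rw [← Finset.mul_prod_erase univ (fun k => x i + y k) (Finset.mem_univ j)]
    field_simp [hxy i j]
  -- W = V_{-y} * A is diagonal
  have hW : vandermonde (fun i => -y i) * A =
      Matrix.diagonal (fun i => ∏ k ∈ univ.erase i, (y k - y i)) := by
    ext i j
    rw [Matrix.mul_apply]
    simp only [vandermonde, hA, Matrix.of_apply]
    rw [heval (-y i) j, hp]
    simp only [Polynomial.eval_prod, Polynomial.eval_add, Polynomial.eval_X, Polynomial.eval_C]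
    rcases eq_or_ne i j with rfl | hij
    · simp [Matrix.diagonal_apply_eq, neg_add_eq_sub]
    · rw [Matrix.diagonal_apply_ne _ hij]
      refine Finset.prod_eq_zero (Finset.mem_erase.mpr ⟨hij, Finset.mem_univ i⟩) ?_
      ring
  -- determinants
  have hdetB : (∏ i : Fin n, ∏ j ∈ Finset.Ioi i, (x j - x i)) * A.det =
      (∏ i : Fin n, ∏ j : Fin n, (x i + y j)) *
        Matrix.det (Matrix.of fun i j => (x i + y j)⁻¹) := by
    have := congrArg Matrix.det hB
    rw [Matrix.det_mul, Matrix.det_vandermonde] at this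
    rw [this]
    exact Matrix.det_mul_column (fun i => ∏ k : Fin n, (x i + y k)) _
  have hdetW : (∏ i : Fin n, ∏ j ∈ Finset.Ioi i, (y i - y j)) * A.det =
      ∏ i : Fin n, ∏ k ∈ univ.erase i, (y k - y i) := by
    have := congrArg Matrix.det hW
    rw [Matrix.det_mul, Matrix.det_vandermonde, Matrix.det_diagonal] at this
    simpa [neg_add_eq_sub] using this
  -- split the off-diagonal product
  have hsplit : (∏ i : Fin n, ∏ k ∈ univ.erase i, (y k - y i)) =
      (∏ i : Fin n, ∏ j ∈ Finset.Ioi i, (y j - y i)) *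
      (∏ i : Fin n, ∏ j ∈ Finset.Ioi i, (y i - y j)) := by
    have h := Finset.prod_prod_Ioi_mul_eq_prod_prod_off_diag (fun a b => y a - y b)
    simp only [Finset.compl_singleton] at h
    simp only [Finset.prod_mul_distrib] at h
    convert h.symm using 2
  have hyne : (∏ i : Fin n, ∏ j ∈ Finset.Ioi i, (y i - y j)) ≠ 0 := by
    refine Finset.prod_ne_zero_iff.mpr fun i _ => Finset.prod_ne_zero_iff.mpr fun j hj => ?_
    have : i ≠ j := (Finset.mem_Ioi.mp hj).ne
    exact sub_ne_zero_of_ne fun h => this (hy h)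
  have hdetA : A.det = ∏ i : Fin n, ∏ j ∈ Finset.Ioi i, (y j - y i) := by
    refine mul_left_cancel₀ hyne ?_
    rw [hdetW, hsplit]
    ring
  rw [mul_comm, ← hdetB, hdetA]

lemma prod_add_two (d : ℕ) : (∏ x ∈ Finset.range d, (x + 2)) = (d+1).factorial := by
  induction d with
  | zero => simp
  | succ d ih =>
    rw [Finset.prod_range_succ, ih]
    conv_rhs => rw [Nat.factorial_succ]
    ring

/-- The `d × d` matrix with (1-based) entries `jk/((j+1)(j+k+1))` has determinant
`d!/(d+1) · ∏_{i<j}(j-i)² / ∏_{i,j}(i+j+1)`, which is nonzero. -/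
theorem cauchy_like_det' (d : ℕ) :
    letI M : Matrix (Fin d) (Fin d) ℝ :=
      Matrix.of fun j k => (((j : ℕ) + 1 : ℝ) * ((k : ℕ) + 1 : ℝ)) /
        ((((j : ℕ) + 2 : ℝ)) * (((j : ℕ) + (k : ℕ) + 3 : ℝ)))
    M.det = ((Nat.factorial d : ℝ) / (d + 1 : ℝ)) *
        (∏ i : Fin d, ∏ j ∈ Finset.univ.filter (fun j : Fin d => i < j),
          (((j : ℕ) : ℝ) - ((i : ℕ) : ℝ)) ^ 2) /
        (∏ i : Fin d, ∏ j : Fin d, ((i : ℕ) + (j : ℕ) + 3 : ℝ)) ∧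
      M.det ≠ 0 := by
  set M : Matrix (Fin d) (Fin d) ℝ :=
    Matrix.of fun j k => (((j : ℕ) + 1 : ℝ) * ((k : ℕ) + 1 : ℝ)) /
      ((((j : ℕ) + 2 : ℝ)) * (((j : ℕ) + (k : ℕ) + 3 : ℝ))) with hMdef
  set x : Fin d → ℝ := fun i => (i : ℕ) + 2 with hx
  set y : Fin d → ℝ := fun j => (j : ℕ) + 1 with hyy
  have hxy : ∀ i j, x i + y j ≠ 0 := by
    intro i j; simp only [hx, hyy]; positivity
  have hy : Function.Injective y := by
    intro a b hab
    simp only [hyy] at hab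
    have : (a : ℕ) = (b : ℕ) := by exact_mod_cast (by linarith : ((a:ℕ):ℝ) = (b:ℕ))
    exact Fin.ext this
  have key := my_cauchy_det d x y hxy hy
  -- abbreviations
  set Q : ℝ := ∏ i : Fin d, ∏ j : Fin d, ((i : ℕ) + (j : ℕ) + 3 : ℝ) with hQdef
  set P : ℝ := ∏ i : Fin d, ∏ j ∈ Finset.univ.filter (fun j : Fin d => i < j),
      (((j : ℕ) : ℝ) - ((i : ℕ) : ℝ)) ^ 2 with hPdef
  have hxysum : ∀ i j : Fin d, x i + y j = ((i : ℕ) + (j : ℕ) + 3 : ℝ) := by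
    intro i j; simp [hx, hyy]; ring
  have hQeq : (∏ i : Fin d, ∏ j : Fin d, (x i + y j)) = Q := by
    rw [hQdef]
    exact Finset.prod_congr rfl fun i _ => Finset.prod_congr rfl fun j _ => hxysum i j
  have hQpos : 0 < Q := by
    rw [hQdef]
    refine Finset.prod_pos fun i _ => Finset.prod_pos fun j _ => by positivity
  have hPeq : (∏ i : Fin d, ∏ j ∈ Finset.Ioi i, (x j - x i)) *
      (∏ i : Fin d, ∏ j ∈ Finset.Ioi i, (y j - y i)) = P := by
    rw [hPdef, ← Finset.prod_mul_distrib]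
    refine Finset.prod_congr rfl fun i _ => ?_
    rw [← Finset.prod_mul_distrib]
    rw [show Finset.univ.filter (fun j : Fin d => i < j) = Finset.Ioi i from
      Finset.filter_lt_eq_Ioi]
    refine Finset.prod_congr rfl fun j _ => ?_
    simp only [hx, hyy]
    ring
  have hPpos : 0 < P := by
    rw [hPdef]
    refine Finset.prod_pos fun i _ => Finset.prod_pos fun j hj => ?_
    have hij : i < j := by simpa using (Finset.mem_filter.mp hj).2
    have h : ((i : ℕ) : ℝ) < ((j : ℕ) : ℝ) := by exact_mod_cast hij
    exact pow_pos (sub_pos.mpr h) 2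
  rw [hQeq, hPeq] at key
  -- detC
  set C : Matrix (Fin d) (Fin d) ℝ := Matrix.of fun i j => (x i + y j)⁻¹ with hC
  have hdetC : C.det = P / Q := by
    rw [eq_div_iff hQpos.ne']
    exact key
  -- factor M
  have hM : M = Matrix.of fun (i j : Fin d) =>
      ((((i : ℕ) : ℝ) + 1) / (((i : ℕ) : ℝ) + 2)) * (((((j : ℕ) : ℝ) + 1)) * C i j) := by
    ext i j
    simp only [hMdef, hC, Matrix.of_apply, hx, hyy]
    rw [show ((i : ℕ) : ℝ) + 2 + (((j : ℕ) : ℝ) + 1) = ((i : ℕ) + (j : ℕ) + 3 : ℝ) by ring]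
    have h1 : (((i : ℕ) : ℝ) + 2) ≠ 0 := by positivity
    have h2 : ((i : ℕ) + (j : ℕ) + 3 : ℝ) ≠ 0 := by positivity
    field_simp
  have hfact1 : (∏ i : Fin d, (((i : ℕ) : ℝ) + 1)) = (Nat.factorial d : ℝ) := by
    rw [Fin.prod_univ_eq_prod_range (fun i => ((i : ℝ) + 1))]
    rw [← Finset.prod_range_add_one_eq_factorial d]
    push_cast
    rfl
  have hfact2 : (∏ i : Fin d, (((i : ℕ) : ℝ) + 2)) = (Nat.factorial (d+1) : ℝ) := by
    rw [Fin.prod_univ_eq_prod_range (fun i => ((i : ℝ) + 2))]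
    rw [← prod_add_two d]
    push_cast
    rfl
  have hdetM : M.det = ((Nat.factorial d : ℝ) / (Nat.factorial (d+1) : ℝ)) *
      ((Nat.factorial d : ℝ) * C.det) := by
    rw [hM]
    erw [Matrix.det_mul_column]
    erw [Matrix.det_mul_row]
    rw [Finset.prod_div_distrib, hfact1, hfact2]
    try ring
  have hfactpos : (0:ℝ) < Nat.factorial d := by exact_mod_cast d.factorial_pos
  have hsucc : (Nat.factorial (d+1) : ℝ) = ((d:ℝ) + 1) * (Nat.factorial d : ℝ) := by
    rw [Nat.factorial_succ]; push_cast; ring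
  have hd1 : ((d:ℝ) + 1) ≠ 0 := by positivity
  have hmain : M.det = ((Nat.factorial d : ℝ) / ((d:ℝ) + 1)) * P / Q := by
    rw [hdetM, hdetC, hsucc]
    field_simp
  refine ⟨hmain, ?_⟩
  rw [hmain]
  exact div_ne_zero (mul_ne_zero (div_ne_zero hfactpos.ne' hd1) hPpos.ne') hQpos.ne'
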